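/- arXiv:1506.07405 — 2 statements merged into one kernel-verified Lean document; each statement's English description precedes it below -/
import Mathlib

section
/- Monotonic improvement of the determinant similarity in the noiseless case: Let 0 < d < n, let Ū and U_t be n×d matrices with orthonormal columns with det(Ūᵀ U_t) ≠ 0, and let the observation be x = v = Ū s for some s ∈ ℝ^d. Write v_∥ = U_t U_tᵀ v and v_⊥ = v − v_∥, and assume v_∥ ≠ 0 and v_⊥ ≠ 0. Apply one GROUSE update with step size θ = arctan(‖v_⊥‖/‖v_∥‖) (α = 0). Then ζ_{t+1}/ζ_t = 1 + ‖v_⊥‖²/‖v_∥‖². -/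
open Matrix

noncomputable def vnorm {m : Type*} [Fintype m] (x : m → ℝ) : ℝ :=
  Real.sqrt (∑ i, x i ^ 2)

/-- `U` has orthonormal columns. -/
def OrthonormalCols {n d : ℕ} (U : Matrix (Fin n) (Fin d) ℝ) : Prop :=
  Uᵀ * U = 1

/-- One GROUSE update with step angle `θ`: with `w = Uᵀ x`, `p = U w`, `r = x − p`,
`U⁺ = U + (cos θ · p/‖p‖ + sin θ · r/‖r‖ − p/‖p‖) wᵀ/‖w‖`. -/
noncomputable def grouseUpdate {n d : ℕ} (U : Matrix (Fin n) (Fin d) ℝ) (x : Fin n → ℝ)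
    (θ : ℝ) : Matrix (Fin n) (Fin d) ℝ :=
  let w : Fin d → ℝ := Uᵀ *ᵥ x
  let p : Fin n → ℝ := U *ᵥ w
  let r : Fin n → ℝ := x - p
  U + Matrix.of (fun i j =>
    ((Real.cos θ * (p i / vnorm p) + Real.sin θ * (r i / vnorm r)) - p i / vnorm p)
      * (w j / vnorm w))

/-- Determinant similarity `ζ = det(Ūᵀ U Uᵀ Ū)`. -/
noncomputable def zetaSim {n d : ℕ} (Ub U : Matrix (Fin n) (Fin d) ℝ) : ℝ :=
  (Ubᵀ * U * Uᵀ * Ub).det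


lemma vnorm_sq {m : Type*} [Fintype m] (x : m → ℝ) : vnorm x ^ 2 = x ⬝ᵥ x := by
  rw [vnorm, Real.sq_sqrt (by positivity)]
  simp [dotProduct, sq]

lemma vnorm_nonneg {m : Type*} [Fintype m] (x : m → ℝ) : 0 ≤ vnorm x :=
  Real.sqrt_nonneg _

lemma vnorm_pos {m : Type*} [Fintype m] {x : m → ℝ} (hx : x ≠ 0) : 0 < vnorm x := by
  rw [vnorm]
  apply Real.sqrt_pos.mpr
  obtain ⟨i, hi⟩ : ∃ i, x i ≠ 0 := by
    by_contra h
    push_neg at h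
    exact hx (funext h)
  exact Finset.sum_pos' (fun j _ => sq_nonneg _) ⟨i, Finset.mem_univ i, by positivity⟩

lemma grouse_entry (np nr nv nw pi vi wj : ℝ) (h1 : np ≠ 0) (h2 : nr ≠ 0)
    (h3 : nv ≠ 0) (h4 : nw ≠ 0) :
    (np / nv * (pi / np) + nr / nv * ((vi - pi) / nr) - pi / np) * (wj / nw) =
    (nv⁻¹ * vi - np⁻¹ * pi) * (nw⁻¹ * wj) := by
  field_simp
  ring

set_option maxHeartbeats 1600000 in
/-- **Monotonic improvement of the determinant similarity, noiseless case.**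
With observation `v = Ū s`, projection `v_∥ = U Uᵀ v ≠ 0`, residual `v_⊥ = v − v_∥ ≠ 0`,
and the greedy step `θ = arctan(‖v_⊥‖/‖v_∥‖)`, one GROUSE update yields
`ζ_{t+1}/ζ_t = 1 + ‖v_⊥‖²/‖v_∥‖²`. -/
theorem zeta_monotone_noiseless {n d : ℕ} (hd : 0 < d) (hdn : d < n)
    (Ub U : Matrix (Fin n) (Fin d) ℝ)
    (hUb : OrthonormalCols Ub) (hU : OrthonormalCols U)
    (hdet : (Ubᵀ * U).det ≠ 0)
    (s : Fin d → ℝ) (v : Fin n → ℝ) (hv : v = Ub *ᵥ s)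
    (vpar vperp : Fin n → ℝ)
    (hvpar : vpar = U *ᵥ (Uᵀ *ᵥ v)) (hvperp : vperp = v - vpar)
    (hpar : vpar ≠ 0) (hperp : vperp ≠ 0) :
    zetaSim Ub (grouseUpdate U v (Real.arctan (vnorm vperp / vnorm vpar)))
        / zetaSim Ub U
      = 1 + vnorm vperp ^ 2 / vnorm vpar ^ 2 := by
  classical
  -- abbreviations
  set w : Fin d → ℝ := Uᵀ *ᵥ v with hw
  have hp : vpar = U *ᵥ w := hvpar
  set p : Fin n → ℝ := U *ᵥ w with hpdef
  have hpar' : p ≠ 0 := hp ▸ hpar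
  set r : Fin n → ℝ := v - p with hrdef
  have hr : vperp = r := by rw [hvperp, hrdef, hp]
  have hperp' : r ≠ 0 := hr ▸ hperp
  set np := vnorm p with hnp
  set nr := vnorm r with hnr
  set nv := vnorm v with hnv
  set nw := vnorm w with hnw
  -- dot product facts
  have hdot : ∀ x : Fin n → ℝ, vnorm x ^ 2 = x ⬝ᵥ x := fun x => vnorm_sq x
  have hdotd : ∀ x : Fin d → ℝ, vnorm x ^ 2 = x ⬝ᵥ x := fun x => vnorm_sq x
  have hpp : p ⬝ᵥ p = w ⬝ᵥ w := by
    rw [hpdef, dotProduct_mulVec, ← mulVec_transpose, mulVec_mulVec, hU, one_mulVec]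
  have hpv : p ⬝ᵥ v = w ⬝ᵥ w := by
    rw [hpdef, dotProduct_comm, dotProduct_mulVec, ← mulVec_transpose, ← hw]
  have hpr : p ⬝ᵥ r = 0 := by rw [hrdef, dotProduct_sub, hpv, hpp, sub_self]
  have hsv : Ubᵀ *ᵥ v = s := by
    rw [hv, mulVec_mulVec, hUb, one_mulVec]
  have hss : s ⬝ᵥ s = v ⬝ᵥ v := by
    rw [hv, dotProduct_mulVec, ← mulVec_transpose, mulVec_mulVec, hUb, one_mulVec]
  -- positivity
  have hnppos : 0 < np := vnorm_pos hpar'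
  have hnrpos : 0 < nr := vnorm_pos hperp'
  have hnwnp : nw = np := by
    rw [hnw, hnp, vnorm, vnorm]
    congr 1
    have h1 : ∑ i, w i ^ 2 = w ⬝ᵥ w := by simp [dotProduct, sq]
    have h2 : ∑ i, p i ^ 2 = p ⬝ᵥ p := by simp [dotProduct, sq]
    rw [h1, h2, hpp]
  have hpyth : nv ^ 2 = np ^ 2 + nr ^ 2 := by
    have hv2 : v = p + r := by rw [hrdef]; ring
    rw [hnv, hnp, hnr, hdot, hdot, hdot, hv2]
    rw [add_dotProduct, dotProduct_add, dotProduct_add]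
    have : r ⬝ᵥ p = p ⬝ᵥ r := dotProduct_comm r p
    rw [this, hpr]
    ring
  have hnvnn : 0 ≤ nv := by rw [hnv]; exact vnorm_nonneg v
  have hnvpos : 0 < nv := by nlinarith [sq_nonneg nr]
  -- trig simplification
  set θ := Real.arctan (vnorm vperp / vnorm vpar) with hθ
  clear_value w p r np nr nv nw θ
  have hsqrt : Real.sqrt (1 + (nr / np) ^ 2) = nv / np := by
    have h1 : 1 + (nr / np) ^ 2 = (nv / np) ^ 2 := by
      field_simp
      nlinarith
    rw [h1, Real.sqrt_sq (by positivity)]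
  have hcos : Real.cos θ = np / nv := by
    rw [hθ, hr, hp, ← hnr, ← hnp, Real.cos_arctan, hsqrt]
    field_simp
  have hsin : Real.sin θ = nr / nv := by
    rw [hθ, hr, hp, ← hnr, ← hnp, Real.sin_arctan, hsqrt]
    have hnp0 : np ≠ 0 := ne_of_gt hnppos
    have hnv0 : nv ≠ 0 := ne_of_gt hnvpos
    field_simp
  -- rewrite the update as a rank-one perturbation
  set a : Fin n → ℝ := nv⁻¹ • v - np⁻¹ • p with ha
  set b : Fin d → ℝ := nw⁻¹ • w with hb
  clear_value a b
  have hupdate : grouseUpdate U v θ = U + replicateCol Unit a * replicateRow Unit b := by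
    rw [grouseUpdate]
    ext i j
    simp only [Matrix.add_apply, Matrix.of_apply, add_right_inj, mul_apply,
      Finset.univ_unique, Finset.sum_singleton, replicateCol_apply, replicateRow_apply]
    rw [← hw, ← hpdef, ← hrdef, ← hnp, ← hnr, ← hnw, hcos, hsin, ha, hb]
    simp only [Pi.sub_apply, Pi.smul_apply, smul_eq_mul]
    have hnp0 : np ≠ 0 := ne_of_gt hnppos
    have hnr0 : nr ≠ 0 := ne_of_gt hnrpos
    have hnv0 : nv ≠ 0 := ne_of_gt hnvpos
    have hri : r i = v i - p i := by rw [hrdef]; simp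
    rw [hri]
    exact grouse_entry np nr nv nw (p i) (v i) (w j) hnp0 hnr0 hnv0
      (by rw [hnwnp]; exact hnp0)
  -- the key determinant computation
  set M : Matrix (Fin d) (Fin d) ℝ := Ubᵀ * U with hM
  clear_value M
  have hMunit : IsUnit M.det := isUnit_iff_ne_zero.mpr hdet
  have hwsM : w = s ᵥ* M := by
    rw [hw, hv, mulVec_mulVec, ← vecMul_transpose, hM, transpose_mul, transpose_transpose]
  have hwM : w ᵥ* M⁻¹ = s := by
    rw [hwsM, vecMul_vecMul, Matrix.mul_nonsing_inv M hMunit, vecMul_one]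
  have hu : Ubᵀ *ᵥ a = nv⁻¹ • s - np⁻¹ • (M *ᵥ w) := by
    rw [ha, mulVec_sub, mulVec_smul, mulVec_smul, hsv, hpdef, mulVec_mulVec, ← hM]
  have hkey : (Ubᵀ * grouseUpdate U v θ).det = M.det * (nv / np) := by
    rw [hupdate, Matrix.mul_add, ← Matrix.mul_assoc, ← replicateCol_mulVec, ← hM]
    rw [det_add_replicateCol_mul_replicateRow hMunit]
    congr 1
    rw [← Matrix.replicateRow_vecMul, det_unique]
    simp only [Matrix.add_apply, Matrix.one_apply_eq, replicateRow_mul_replicateCol_apply]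
    have hbM : b ᵥ* M⁻¹ = nw⁻¹ • s := by rw [hb, smul_vecMul, hwM]
    have hsMw : s ⬝ᵥ (M *ᵥ w) = w ⬝ᵥ w := by
      rw [dotProduct_mulVec, ← hwsM]
    have hs2 : s ⬝ᵥ s = nv ^ 2 := by rw [hss, ← hdot v, ← hnv]
    have hw2 : w ⬝ᵥ w = nw ^ 2 := by rw [hnw]; exact (hdotd w).symm
    rw [hu, hbM, smul_dotProduct, dotProduct_sub, dotProduct_smul, dotProduct_smul,
      hsMw, hs2, hw2]
    have hnp0 : np ≠ 0 := ne_of_gt hnppos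
    have hnv0 : nv ≠ 0 := ne_of_gt hnvpos
    rw [hnwnp]
    simp only [smul_eq_mul]
    field_simp
    ring
  -- zeta as a square
  have hzeta : ∀ U' : Matrix (Fin n) (Fin d) ℝ, zetaSim Ub U' = (Ubᵀ * U').det ^ 2 := by
    intro U'
    rw [zetaSim, Matrix.mul_assoc (Ubᵀ * U') U'ᵀ Ub, det_mul]
    have : (U'ᵀ * Ub) = (Ubᵀ * U')ᵀ := by rw [transpose_mul, transpose_transpose]
    rw [this, det_transpose, sq]
  have h1 : zetaSim Ub (grouseUpdate U v θ) = (M.det * (nv / np)) ^ 2 := by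
    rw [hzeta, hkey]
  have h2 : zetaSim Ub U = M.det ^ 2 := by rw [hzeta, ← hM]
  rw [h1, h2]
  have hnp0 : np ≠ 0 := ne_of_gt hnppos
  have hnv0 : nv ≠ 0 := ne_of_gt hnvpos
  have hrw1 : vnorm vperp = nr := by rw [hr, hnr]
  have hrw2 : vnorm vpar = np := by rw [hp, ← hnp]
  rw [hrw1, hrw2]
  rw [mul_pow, mul_comm, mul_div_assoc, div_self (pow_ne_zero 2 hdet), mul_one,
    div_pow, hpyth, add_div, div_self (pow_ne_zero 2 hnp0)]
end

section
/- Determinant similarity ratio of the noiseless GROUSE update for an arbitrary step: Let 0 < d < n, let Ū and U_t be n×d matrices with orthonormal columns with det(Ūᵀ U_t) ≠ 0, and let the observation be x = v = Ū s for some s ∈ ℝ^d. Write v_∥ = U_t U_tᵀ v and v_⊥ = v − v_∥, and assume v_∥ ≠ 0 and v_⊥ ≠ 0. For any angle θ, apply the GROUSE update U_{t+1} = U_t + (cos(θ) v_∥/‖v_∥‖ + sin(θ) v_⊥/‖v_⊥‖ − v_∥/‖v_∥‖) wᵀ/‖w‖ with w = U_tᵀ v. Then ζ_{t+1}/ζ_t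 = (cos θ + (‖v_⊥‖/‖v_∥‖) sin θ)², where ζ_t := det(Ūᵀ U_t U_tᵀ Ū). -/
open Matrix

lemma dot_mulVec_mulVec {n d : ℕ} {M : Matrix (Fin n) (Fin d) ℝ} (h : Mᵀ * M = 1)
    (x y : Fin d → ℝ) : (M *ᵥ x) ⬝ᵥ (M *ᵥ y) = x ⬝ᵥ y := by
  rw [Matrix.dotProduct_mulVec, ← Matrix.mulVec_transpose, Matrix.mulVec_mulVec, h,
    Matrix.one_mulVec]

/-- **Determinant similarity ratio of the noiseless GROUSE update for an arbitrary step.**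
With observation `v = Ū s`, projection `v_∥ = U Uᵀ v ≠ 0`, residual `v_⊥ = v − v_∥ ≠ 0`,
`w = Uᵀ v`, and update
`U⁺ = U + (cos θ · v_∥/‖v_∥‖ + sin θ · v_⊥/‖v_⊥‖ − v_∥/‖v_∥‖) wᵀ/‖w‖`, we have
`ζ_{t+1}/ζ_t = (cos θ + (‖v_⊥‖/‖v_∥‖) sin θ)²`. -/
theorem zeta_ratio_arbitrary_step {n d : ℕ} (hd : 0 < d) (hdn : d < n)
    (Ub U : Matrix (Fin n) (Fin d) ℝ)
    (hUb : OrthonormalCols Ub) (hU : OrthonormalCols U)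
    (hdet : (Ubᵀ * U).det ≠ 0)
    (s : Fin d → ℝ) (v : Fin n → ℝ) (hv : v = Ub *ᵥ s)
    (vpar vperp : Fin n → ℝ) (w : Fin d → ℝ)
    (hvpar : vpar = U *ᵥ (Uᵀ *ᵥ v)) (hvperp : vperp = v - vpar) (hw : w = Uᵀ *ᵥ v)
    (hpar : vpar ≠ 0) (hperp : vperp ≠ 0)
    (θ : ℝ) (Unext : Matrix (Fin n) (Fin d) ℝ)
    (hUnext : Unext = U + Matrix.of (fun i j =>
      ((Real.cos θ * (vpar i / vnorm vpar) + Real.sin θ * (vperp i / vnorm vperp))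
          - vpar i / vnorm vpar) * (w j / vnorm w))) :
    zetaSim Ub Unext / zetaSim Ub U
      = (Real.cos θ + (vnorm vperp / vnorm vpar) * Real.sin θ) ^ 2 := by
  have hUbU : Ubᵀ * Ub = 1 := hUb
  have hUU : Uᵀ * U = 1 := hU
  set A := Ubᵀ * U with hA
  set p := vnorm vpar with hpdef
  set q := vnorm vperp with hqdef
  have hp : 0 < p := vnorm_pos hpar
  have hq : 0 < q := vnorm_pos hperp
  -- basic vector facts
  have hvparw : vpar = U *ᵥ w := by rw [hvpar, hw]
  have hs : Ubᵀ *ᵥ v = s := by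
    rw [hv, Matrix.mulVec_mulVec, hUbU, Matrix.one_mulVec]
  have hwAs : w = Aᵀ *ᵥ s := by
    rw [hw, hv, Matrix.mulVec_mulVec, hA, Matrix.transpose_mul, Matrix.transpose_transpose]
  have hww : w ⬝ᵥ w = p ^ 2 := by
    rw [hpdef, vnorm_sq, hvparw, dot_mulVec_mulVec hUU]
  have hdotpv : vpar ⬝ᵥ v = w ⬝ᵥ w := by
    rw [hvparw, dotProduct_comm, Matrix.dotProduct_mulVec, ← Matrix.mulVec_transpose, ← hw]
  have hortho : vpar ⬝ᵥ vperp = 0 := by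
    rw [hvperp, dotProduct_sub, hdotpv, hvparw, dot_mulVec_mulVec hUU, sub_self]
  have hss : s ⬝ᵥ s = p ^ 2 + q ^ 2 := by
    have hvv : v ⬝ᵥ v = p ^ 2 + q ^ 2 := by
      have hv2 : v = vpar + vperp := by rw [hvperp]; abel
      have h1 : vperp ⬝ᵥ vpar = 0 := by rw [dotProduct_comm]; exact hortho
      rw [hv2, dotProduct_add, add_dotProduct, add_dotProduct, hortho, h1,
        ← vnorm_sq, ← vnorm_sq, ← hpdef, ← hqdef]
      ring
    rw [← hvv, hv, dot_mulVec_mulVec hUbU]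
  have hwnorm : vnorm w = p := by
    rw [hpdef, vnorm, vnorm]
    congr 1
    have : (∑ i, w i ^ 2) = w ⬝ᵥ w := by simp [dotProduct, sq]
    have h2 : (∑ i, vpar i ^ 2) = vpar ⬝ᵥ vpar := by simp [dotProduct, sq]
    rw [this, h2, hvparw, dot_mulVec_mulVec hUU]
  -- invertibility of A
  have hAunit : IsUnit A.det := isUnit_iff_ne_zero.mpr hdet
  have hAinv : A⁻¹ * A = 1 := Matrix.nonsing_inv_mul A hAunit
  have hAinv' : A * A⁻¹ = 1 := Matrix.mul_nonsing_inv A hAunit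
  -- the rank-one update
  set f : Fin n → ℝ := fun i =>
    (Real.cos θ * (vpar i / p) + Real.sin θ * (vperp i / q)) - vpar i / p with hf
  set r : Fin d → ℝ := fun j => w j / vnorm w with hr
  have hf' : f = ((Real.cos θ - 1) / p) • vpar + (Real.sin θ / q) • vperp := by
    funext i
    simp only [hf, Pi.add_apply, Pi.smul_apply, smul_eq_mul]
    ring
  set c : Fin d → ℝ := Ubᵀ *ᵥ f with hc
  -- det of the updated overlap matrix
  have hM : Ubᵀ * Unext = A + Matrix.replicateCol Unit c * Matrix.replicateRow Unit r := by
    rw [hUnext, Matrix.mul_add, ← hA]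
    congr 1
    have h1 : (Matrix.of fun i j => f i * r j) = Matrix.vecMulVec f r := rfl
    rw [h1, Matrix.vecMulVec_eq Unit, ← Matrix.mul_assoc, ← Matrix.replicateCol_mulVec, hc]
  have hdetM : (Ubᵀ * Unext).det = A.det * (1 + r ⬝ᵥ (A⁻¹ *ᵥ c)) := by
    rw [hM, Matrix.det_add_replicateCol_mul_replicateRow hAunit]
    congr 1
    rw [Matrix.mul_assoc, ← Matrix.replicateCol_mulVec, Matrix.det_unique]
    simp [Matrix.one_apply]
  -- compute the scalar
  have hgpar : w ⬝ᵥ (A⁻¹ *ᵥ (Ubᵀ *ᵥ vpar)) = p ^ 2 := by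
    rw [hvparw, Matrix.mulVec_mulVec, Matrix.mulVec_mulVec, Matrix.mul_assoc, ← hA,
      hAinv, Matrix.one_mulVec, hww]
  have hgv : w ⬝ᵥ (A⁻¹ *ᵥ (Ubᵀ *ᵥ v)) = p ^ 2 + q ^ 2 := by
    rw [hs, ← hss]
    nth_rewrite 1 [hwAs]
    rw [Matrix.mulVec_transpose, Matrix.dotProduct_mulVec, Matrix.vecMul_vecMul]
    rw [← Matrix.dotProduct_mulVec, hAinv', Matrix.one_mulVec]
  have hgperp : w ⬝ᵥ (A⁻¹ *ᵥ (Ubᵀ *ᵥ vperp)) = q ^ 2 := by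
    rw [hvperp, Matrix.mulVec_sub, Matrix.mulVec_sub, dotProduct_sub, hgv, hgpar]
    ring
  have hscal : r ⬝ᵥ (A⁻¹ *ᵥ c) = Real.cos θ + (q / p) * Real.sin θ - 1 := by
    have hrw : r = (vnorm w)⁻¹ • w := by
      funext j; simp [hr, div_eq_inv_mul]
    have hcval : w ⬝ᵥ (A⁻¹ *ᵥ c)
        = ((Real.cos θ - 1) / p) * p ^ 2 + (Real.sin θ / q) * q ^ 2 := by
      rw [hc, hf', Matrix.mulVec_add, Matrix.mulVec_smul, Matrix.mulVec_smul,
        Matrix.mulVec_add, Matrix.mulVec_smul, Matrix.mulVec_smul,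
        dotProduct_add, dotProduct_smul, dotProduct_smul, hgpar, hgperp]
      simp
    rw [hrw, smul_dotProduct, hcval, hwnorm, smul_eq_mul]
    field_simp
    ring
  -- put everything together
  set k := Real.cos θ + (q / p) * Real.sin θ with hk
  have hdetM' : (Ubᵀ * Unext).det = A.det * k := by
    rw [hdetM, hscal, hk]; ring_nf
  have hz1 : zetaSim Ub Unext = ((Ubᵀ * Unext).det) ^ 2 := by
    rw [zetaSim, Matrix.mul_assoc]
    have : Unextᵀ * Ub = (Ubᵀ * Unext)ᵀ := by
      rw [Matrix.transpose_mul, Matrix.transpose_transpose]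
    rw [this, Matrix.det_mul, Matrix.det_transpose, sq]
  have hz2 : zetaSim Ub U = (A.det) ^ 2 := by
    rw [zetaSim, Matrix.mul_assoc]
    have : Uᵀ * Ub = (Ubᵀ * U)ᵀ := by
      rw [Matrix.transpose_mul, Matrix.transpose_transpose]
    rw [this, Matrix.det_mul, Matrix.det_transpose, ← hA, sq]
  rw [hz1, hz2, hdetM', mul_pow, mul_comm, mul_div_assoc,
    div_self (pow_ne_zero 2 hdet), mul_one, hk]
end
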